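/- Let d ≥ 1, k ≥ 1, β > 0, Δ > 0, let w^1, …, w^k ∈ ℝ^d be unit vectors and u_1, …, u_k ∈ [−1, 1], and define w̄(ξ) = Σ_{ℓ=1}^k u_ℓ E_ξ[f'(⟨w^ℓ, X⟩)] w^ℓ, where f'(x) = β(1 − tanh²(βx)) and E_ξ is expectation over X ~ N(ξ, I_{d×d}). If ξ ∈ ℝ^d satisfies |⟨w^ℓ, ξ⟩| ≥ Δ for every ℓ ∈ {1, …, k}, then ‖w̄(ξ)‖₂ ≤ 8kβ e^{2β² − 2βΔ}. -/

import Mathlib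

open MeasureTheory ProbabilityTheory Real
open scoped NNReal RealInnerProductSpace

/-- The Gaussian measure on `EuclideanSpace ℝ (Fin d)` with mean `ξ` and covariance
`σ2` times the identity (i.e. i.i.d. `N(ξ i, σ2)` coordinates). -/
noncomputable def gaussE (d : ℕ) (ξ : EuclideanSpace ℝ (Fin d)) (σ2 : ℝ≥0) :
    Measure (EuclideanSpace ℝ (Fin d)) :=
  (Measure.pi fun i : Fin d => gaussianReal (ξ i) σ2).map
    (MeasurableEquiv.toLp 2 (Fin d → ℝ))

section aux

lemma aux_coshge (t : ℝ) : Real.exp |t| / 2 ≤ Real.cosh t := by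
  rw [Real.cosh_eq]
  rcases abs_cases t with ⟨h, _⟩ | ⟨h, _⟩ <;> rw [h] <;>
    nlinarith [Real.exp_pos t, Real.exp_pos (-t)]

lemma aux_tanhsq (t : ℝ) : 1 - Real.tanh t ^ 2 ≤ 4 * Real.exp (-(2 * |t|)) := by
  have hc : Real.exp |t| / 2 ≤ Real.cosh t := aux_coshge t
  have hcp : (0:ℝ) < Real.cosh t := Real.cosh_pos t
  have h1 : 1 - Real.tanh t ^ 2 = (Real.cosh t ^ 2)⁻¹ := by
    rw [Real.tanh_eq_sinh_div_cosh, div_pow]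
    have hs := Real.cosh_sq_sub_sinh_sq t
    field_simp
    linarith
  rw [h1]
  have h2 : 4 * Real.exp (-(2 * |t|)) = ((Real.exp |t| / 2) ^ 2)⁻¹ := by
    rw [Real.exp_neg, div_pow, ← Real.exp_nat_mul]
    push_cast
    field_simp
    ring_nf
  rw [h2]
  apply inv_anti₀ (by positivity)
  nlinarith [Real.exp_pos |t|]

lemma aux_tanh_sq_le_one (t : ℝ) : Real.tanh t ^ 2 ≤ 1 := by
  rw [Real.tanh_eq_sinh_div_cosh, div_pow]
  have hs := Real.cosh_sq_sub_sinh_sq t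
  have hcp := Real.cosh_pos t
  rw [div_le_one (by positivity)]
  nlinarith

lemma aux_continuous_tanh : Continuous Real.tanh := by
  have h : Real.tanh = fun x => Real.sinh x / Real.cosh x :=
    funext Real.tanh_eq_sinh_div_cosh
  rw [h]
  exact Real.continuous_sinh.div Real.continuous_cosh fun x => (Real.cosh_pos x).ne'

lemma aux_pdfmul (m c x : ℝ) :
    gaussianPDFReal m 1 x * Real.exp (c * x)
      = Real.exp (c * m + c ^ 2 / 2) * gaussianPDFReal (m + c) 1 x := by
  simp only [gaussianPDFReal, NNReal.coe_one, mul_one]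
  rw [mul_comm, ← mul_assoc, mul_comm (Real.exp (c*x)), mul_assoc, ← Real.exp_add,
    mul_comm (Real.exp _), mul_assoc, ← Real.exp_add]
  congr 1
  ring_nf

lemma aux_gr_eq (m : ℝ) : gaussianReal m 1
    = volume.withDensity (fun x => ((gaussianPDFReal m 1 x).toNNReal : ENNReal)) := by
  rw [gaussianReal_of_var_ne_zero m one_ne_zero]
  rfl

lemma aux_smul_eq (m c : ℝ) : (fun x => (gaussianPDFReal m 1 x).toNNReal • Real.exp (c * x))
    = fun x => Real.exp (c * m + c ^ 2 / 2) * gaussianPDFReal (m + c) 1 x := by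
  ext x
  rw [NNReal.smul_def, Real.coe_toNNReal _ (gaussianPDFReal_nonneg m 1 x)]
  rw [smul_eq_mul, aux_pdfmul]

lemma aux_integrable_exp_gauss (m c : ℝ) :
    Integrable (fun t => Real.exp (c * t)) (gaussianReal m 1) := by
  rw [aux_gr_eq]
  rw [integrable_withDensity_iff_integrable_smul
    ((measurable_gaussianPDFReal m 1).real_toNNReal)]
  rw [aux_smul_eq]
  exact (integrable_gaussianPDFReal (m + c) 1).const_mul _

lemma aux_integral_exp_gauss (m c : ℝ) :
    ∫ t, Real.exp (c * t) ∂(gaussianReal m 1) = Real.exp (c * m + c ^ 2 / 2) := by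
  rw [aux_gr_eq, integral_withDensity_eq_integral_smul
    ((measurable_gaussianPDFReal m 1).real_toNNReal), aux_smul_eq,
    integral_const_mul, integral_gaussianPDFReal_eq_one (m+c) one_ne_zero, mul_one]

lemma aux_pi_exp (d : ℕ) (ξ w : Fin d → ℝ) (c : ℝ) :
    ∫ x : Fin d → ℝ, ∏ i, Real.exp (c * w i * x i)
        ∂(Measure.pi fun i => gaussianReal (ξ i) 1)
      = ∏ i, ∫ t : ℝ, Real.exp (c * w i * t) ∂(gaussianReal (ξ i) 1) :=
  MeasureTheory.integral_fintype_prod_eq_prod (E := fun _ => ℝ)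
    (fun i t => Real.exp (c * w i * t))
    (μ := fun i => gaussianReal (ξ i) 1)

lemma aux_pi_exp_int (d : ℕ) (ξ w : Fin d → ℝ) (c : ℝ) :
    Integrable (fun x : Fin d → ℝ => ∏ i, Real.exp (c * w i * x i))
        (Measure.pi fun i => gaussianReal (ξ i) 1) :=
  MeasureTheory.Integrable.fintype_prod_dep (E := fun _ => ℝ)
    (f := fun i t => Real.exp (c * w i * t))
    (μ := fun i => gaussianReal (ξ i) 1)
    (fun i => aux_integrable_exp_gauss (ξ i) (c * w i))

lemma aux_inner_equiv (d : ℕ) (w : EuclideanSpace ℝ (Fin d)) (x : Fin d → ℝ) :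
    ⟪w, (MeasurableEquiv.toLp 2 (Fin d → ℝ)) x⟫ = ∑ i, w i * x i := by
  rw [PiLp.inner_apply]
  simp [MeasurableEquiv.coe_toLp, RCLike.inner_apply, mul_comm]

lemma aux_gaussE_exp (d : ℕ) (ξ w : EuclideanSpace ℝ (Fin d)) (hw : ‖w‖ = 1) (c : ℝ) :
    ∫ x, Real.exp (c * ⟪w, x⟫) ∂(gaussE d ξ 1)
      = Real.exp (c * ⟪w, ξ⟫ + c ^ 2 / 2) := by
  rw [gaussE, integral_map_equiv]
  have h1 : (fun x : Fin d → ℝ =>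
      Real.exp (c * ⟪w, (MeasurableEquiv.toLp 2 (Fin d → ℝ)) x⟫))
      = fun x => ∏ i, Real.exp (c * w i * x i) := by
    ext x
    rw [aux_inner_equiv, ← Real.exp_sum, Finset.mul_sum]
    congr 1
    exact Finset.sum_congr rfl (fun i _ => by ring)
  rw [h1, aux_pi_exp]
  have h2 : ∀ i, ∫ t : ℝ, Real.exp (c * w i * t) ∂(gaussianReal (ξ i) 1)
      = Real.exp (c * w i * ξ i + (c * w i) ^ 2 / 2) :=
    fun i => aux_integral_exp_gauss (ξ i) (c * w i)
  simp_rw [h2, ← Real.exp_sum]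
  congr 1
  rw [Finset.sum_add_distrib]
  have hn : ∑ i, (w i) ^ 2 = 1 := by
    have h0 := hw
    rw [EuclideanSpace.norm_eq] at h0
    simp only [Real.norm_eq_abs, sq_abs] at h0
    have hs := Real.sq_sqrt (Finset.sum_nonneg fun i (_ : i ∈ Finset.univ) => sq_nonneg (w i))
    rw [← hs, h0, one_pow]
  have hi : ⟪w, ξ⟫ = ∑ i, w i * ξ i := by
    rw [PiLp.inner_apply]; simp [RCLike.inner_apply, mul_comm]
  rw [hi, Finset.mul_sum]
  have : ∑ i, (c * w i) ^ 2 / 2 = c ^ 2 / 2 * ∑ i, (w i) ^ 2 := by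
    rw [Finset.mul_sum]
    exact Finset.sum_congr rfl (fun i _ => by ring)
  rw [this, hn, mul_one]
  congr 1
  exact Finset.sum_congr rfl (fun i _ => by ring)

lemma aux_gaussE_exp_int (d : ℕ) (ξ w : EuclideanSpace ℝ (Fin d)) (c : ℝ) :
    Integrable (fun x => Real.exp (c * ⟪w, x⟫)) (gaussE d ξ 1) := by
  rw [gaussE, integrable_map_equiv]
  have h1 : ((fun x => Real.exp (c * ⟪w, x⟫)) ∘ (MeasurableEquiv.toLp 2 (Fin d → ℝ)))
      = fun x : Fin d → ℝ => ∏ i, Real.exp (c * w i * x i) := by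
    ext x
    simp only [Function.comp_apply]
    rw [aux_inner_equiv, ← Real.exp_sum, Finset.mul_sum]
    congr 1
    exact Finset.sum_congr rfl (fun i _ => by ring)
  rw [h1]
  exact aux_pi_exp_int d ξ w c

instance aux_prob (d : ℕ) (ξ : EuclideanSpace ℝ (Fin d)) :
    IsProbabilityMeasure (gaussE d ξ 1) := by
  rw [gaussE]
  exact Measure.isProbabilityMeasure_map
    (MeasurableEquiv.measurable _).aemeasurable

end aux

theorem stmt13 (d k : ℕ) (hd : 1 ≤ d) (hk : 1 ≤ k) (β Δ : ℝ) (hβ : 0 < β) (hΔ : 0 < Δ)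
    (w : Fin k → EuclideanSpace ℝ (Fin d)) (hw : ∀ ℓ, ‖w ℓ‖ = 1)
    (u : Fin k → ℝ) (hu : ∀ ℓ, u ℓ ∈ Set.Icc (-1 : ℝ) 1)
    (ξ : EuclideanSpace ℝ (Fin d)) (hξ : ∀ ℓ, Δ ≤ |⟪w ℓ, ξ⟫|) :
    ‖∑ ℓ, (u ℓ * ∫ x, β * (1 - Real.tanh (β * ⟪w ℓ, x⟫) ^ 2) ∂(gaussE d ξ 1)) • w ℓ‖
      ≤ 8 * k * β * Real.exp (2 * β ^ 2 - 2 * β * Δ) := by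
  set B : ℝ := 4 * β * Real.exp (2 * β ^ 2 - 2 * β * Δ) with hB
  have hBpos : 0 ≤ B := by positivity
  -- bound on each integral
  have key : ∀ ℓ, |∫ x, β * (1 - Real.tanh (β * ⟪w ℓ, x⟫) ^ 2) ∂(gaussE d ξ 1)| ≤ B := by
    intro ℓ
    set m : ℝ := ⟪w ℓ, ξ⟫ with hm
    set c : ℝ := if 0 ≤ m then -(2 * β) else 2 * β with hc
    -- pointwise bound
    have hpt : ∀ x : EuclideanSpace ℝ (Fin d),
        β * (1 - Real.tanh (β * ⟪w ℓ, x⟫) ^ 2) ≤ (4 * β) * Real.exp (c * ⟪w ℓ, x⟫) := by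
      intro x
      have h1 := aux_tanhsq (β * ⟪w ℓ, x⟫)
      have h2 : -(2 * |β * ⟪w ℓ, x⟫|) ≤ c * ⟪w ℓ, x⟫ := by
        rw [abs_mul, abs_of_pos hβ, hc]
        split_ifs with hm' <;>
          nlinarith [neg_abs_le (⟪w ℓ, x⟫ : ℝ), le_abs_self (⟪w ℓ, x⟫ : ℝ),
            abs_nonneg (⟪w ℓ, x⟫ : ℝ)]
      have h3 : Real.exp (-(2 * |β * ⟪w ℓ, x⟫|)) ≤ Real.exp (c * ⟪w ℓ, x⟫) :=
        Real.exp_le_exp.mpr h2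
      nlinarith
    -- nonneg of integrand
    have hnn : ∀ x : EuclideanSpace ℝ (Fin d),
        0 ≤ β * (1 - Real.tanh (β * ⟪w ℓ, x⟫) ^ 2) := by
      intro x
      have := aux_tanh_sq_le_one (β * ⟪w ℓ, x⟫)
      nlinarith
    -- integrability of LHS
    have hmeas : AEStronglyMeasurable
        (fun x : EuclideanSpace ℝ (Fin d) => β * (1 - Real.tanh (β * ⟪w ℓ, x⟫) ^ 2))
        (gaussE d ξ 1) := by
      apply Continuous.aestronglyMeasurable
      exact continuous_const.mul (continuous_const.sub
        ((aux_continuous_tanh.comp (continuous_const.mul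
          (Continuous.inner continuous_const continuous_id))).pow 2))
    have hint : Integrable (fun x : EuclideanSpace ℝ (Fin d) =>
        β * (1 - Real.tanh (β * ⟪w ℓ, x⟫) ^ 2)) (gaussE d ξ 1) := by
      refine Integrable.mono' (integrable_const β) hmeas ?_
      filter_upwards with x
      rw [Real.norm_eq_abs, abs_of_nonneg (hnn x)]
      have h1 := aux_tanh_sq_le_one (β * ⟪w ℓ, x⟫)
      have h2 : (0:ℝ) ≤ Real.tanh (β * ⟪w ℓ, x⟫) ^ 2 := sq_nonneg _
      nlinarith
    have hintg : Integrable (fun x : EuclideanSpace ℝ (Fin d) =>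
        (4 * β) * Real.exp (c * ⟪w ℓ, x⟫)) (gaussE d ξ 1) :=
      (aux_gaussE_exp_int d ξ (w ℓ) c).const_mul _
    have hmono : ∫ x, β * (1 - Real.tanh (β * ⟪w ℓ, x⟫) ^ 2) ∂(gaussE d ξ 1)
        ≤ ∫ x, (4 * β) * Real.exp (c * ⟪w ℓ, x⟫) ∂(gaussE d ξ 1) :=
      integral_mono hint hintg hpt
    have hval : ∫ x, (4 * β) * Real.exp (c * ⟪w ℓ, x⟫) ∂(gaussE d ξ 1)
        = (4 * β) * Real.exp (c * m + c ^ 2 / 2) := by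
      rw [integral_const_mul, aux_gaussE_exp d ξ (w ℓ) (hw ℓ)]
    have hcm : c * m + c ^ 2 / 2 ≤ 2 * β ^ 2 - 2 * β * Δ := by
      have hΔm := hξ ℓ
      rcases le_or_gt 0 m with hm' | hm'
      · have : m ≥ Δ := by rwa [abs_of_nonneg hm'] at hΔm
        rw [hc, if_pos hm']
        nlinarith
      · have : m ≤ -Δ := by
          rw [abs_of_neg hm'] at hΔm; linarith
        rw [hc, if_neg (not_le.mpr hm')]
        nlinarith
    rw [abs_of_nonneg (integral_nonneg hnn)]
    calc ∫ x, β * (1 - Real.tanh (β * ⟪w ℓ, x⟫) ^ 2) ∂(gaussE d ξ 1)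
        ≤ (4 * β) * Real.exp (c * m + c ^ 2 / 2) := hval ▸ hmono
      _ ≤ (4 * β) * Real.exp (2 * β ^ 2 - 2 * β * Δ) := by
          have := Real.exp_le_exp.mpr hcm
          nlinarith
      _ = B := hB.symm
  -- sum it up
  calc ‖∑ ℓ, (u ℓ * ∫ x, β * (1 - Real.tanh (β * ⟪w ℓ, x⟫) ^ 2) ∂(gaussE d ξ 1)) • w ℓ‖
      ≤ ∑ ℓ, ‖(u ℓ * ∫ x, β * (1 - Real.tanh (β * ⟪w ℓ, x⟫) ^ 2) ∂(gaussE d ξ 1)) • w ℓ‖ :=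
        norm_sum_le _ _
    _ ≤ ∑ _ℓ : Fin k, B := by
        apply Finset.sum_le_sum
        intro ℓ _
        rw [norm_smul, hw ℓ, mul_one, Real.norm_eq_abs, abs_mul]
        have h1 : |u ℓ| ≤ 1 := abs_le.mpr ⟨(hu ℓ).1, (hu ℓ).2⟩
        have h2 := key ℓ
        have h3 : (0:ℝ) ≤ |∫ x, β * (1 - Real.tanh (β * ⟪w ℓ, x⟫) ^ 2) ∂(gaussE d ξ 1)| :=
          abs_nonneg _
        nlinarith
    _ = k * B := by rw [Finset.sum_const, Finset.card_univ, Fintype.card_fin, nsmul_eq_mul]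
    _ ≤ 8 * k * β * Real.exp (2 * β ^ 2 - 2 * β * Δ) := by
        rw [hB]
        have hk1 : (1:ℝ) ≤ k := by exact_mod_cast hk
        have he : (0:ℝ) < Real.exp (2 * β ^ 2 - 2 * β * Δ) := Real.exp_pos _
        nlinarith
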